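/- Let G be a countable group and H a strongly self-commensurating, finitely generated subgroup. If L is a subgroup with the same closure of conjugacy class as H in the Chabauty topology (i.e., closure of C(L) equals closure of C(H)), then L is conjugate to H. -/

import Mathlib

open scoped Classical ENNReal
open Topology Filter

noncomputable section

namespace QR

/-- The embedding of `Sub(G)` into `{0,1}^G` by characteristic functions. -/
def chabautyEmbed (G : Type*) [Group G] : Subgroup G → (G → Bool) :=
  fun H g => decide (g ∈ H)

/-- The Chabauty topology on the space of subgroups of a discrete group `G`: the topology
induced from the product topology on `{0,1}^G` via characteristic functions. -/
def chabautyTopology (G : Type*) [Group G] : TopologicalSpace (Subgroup G) :=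
  TopologicalSpace.induced (chabautyEmbed G) inferInstance

/-- The conjugate subgroup `gHg⁻¹`. -/
def conjSubgroup {G : Type*} [Group G] (g : G) (H : Subgroup G) : Subgroup G :=
  Subgroup.map (MulAut.conj g).toMonoidHom H

/-- The conjugacy class of a subgroup, as a subset of `Sub(G)`. -/
def conjClass {G : Type*} [Group G] (H : Subgroup G) : Set (Subgroup G) :=
  {K | ∃ g : G, conjSubgroup g H = K}

lemma mem_conjSubgroup {G : Type*} [Group G] (g x : G) (H : Subgroup G) :
    x ∈ conjSubgroup g H ↔ g⁻¹ * x * g ∈ H := by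
  constructor
  · rintro ⟨y, hy, rfl⟩
    simpa [mul_assoc] using hy
  · intro h
    exact ⟨g⁻¹ * x * g, h, by simp [mul_assoc]⟩

lemma conjSubgroup_one {G : Type*} [Group G] (H : Subgroup G) : conjSubgroup 1 H = H := by
  ext x; simp [mem_conjSubgroup]

lemma conjSubgroup_conjSubgroup {G : Type*} [Group G] (a b : G) (H : Subgroup G) :
    conjSubgroup a (conjSubgroup b H) = conjSubgroup (a * b) H := by
  ext x; simp [mem_conjSubgroup, mul_assoc]

lemma conjSubgroup_eq_self {G : Type*} [Group G] {h : G} {H : Subgroup G} (hh : h ∈ H) :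
    conjSubgroup h H = H := by
  ext x
  rw [mem_conjSubgroup]
  constructor
  · intro hx
    have := H.mul_mem (H.mul_mem hh hx) (H.inv_mem hh)
    simpa [mul_assoc] using this
  · intro hx
    exact H.mul_mem (H.mul_mem (H.inv_mem hh) hx) hh

lemma conjClass_conjSubgroup {G : Type*} [Group G] (g : G) (L : Subgroup G) :
    conjClass (conjSubgroup g L) = conjClass L := by
  ext K
  constructor
  · rintro ⟨a, rfl⟩
    exact ⟨a * g, (conjSubgroup_conjSubgroup a g L).symm⟩
  · rintro ⟨a, rfl⟩
    exact ⟨a * g⁻¹, by rw [conjSubgroup_conjSubgroup]; simp⟩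

lemma isOpen_forall_mem (G : Type*) [Group G] (F : Finset G) :
    IsOpen[chabautyTopology G] {K : Subgroup G | ∀ s ∈ F, s ∈ K} := by
  letI := chabautyTopology G
  have heq : {K : Subgroup G | ∀ s ∈ F, s ∈ K}
      = chabautyEmbed G ⁻¹' {f : G → Bool | ∀ s ∈ F, f s = true} := by
    ext K; simp [chabautyEmbed]
  rw [heq]
  refine isOpen_induced_iff.mpr ⟨_, ?_, rfl⟩
  have heq2 : {f : G → Bool | ∀ s ∈ F, f s = true} = ⋂ s ∈ F, {f : G → Bool | f s = true} := by
    ext f; simp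
  rw [heq2]
  refine isOpen_biInter_finset fun s _ => ?_
  show IsOpen ((fun f : G → Bool => f s) ⁻¹' {true})
  exact IsOpen.preimage (continuous_apply s) (isOpen_discrete _)

/-- A strongly self-commensurating finitely generated subgroup `H` is
conjugation rigid: if the Chabauty closures of the conjugacy classes of `L` and `H` coincide,
then `L` is conjugate to `H`. -/
theorem conjugation_rigid_of_strongly_self_commensurating (G : Type*) [Group G] [Countable G]
    (H L : Subgroup G) (hfg : H.FG)
    (hssc : ∀ g : G, g ∉ H → Subgroup.relIndex (conjSubgroup g H) H = 0)
    (hcl : closure[chabautyTopology G] (conjClass L) =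
      closure[chabautyTopology G] (conjClass H)) :
    ∃ g : G, conjSubgroup g L = H := by
  letI := chabautyTopology G
  obtain ⟨T, hT⟩ := hfg
  -- H lies in the closure of the conjugacy class of L
  have hHcl : H ∈ closure (conjClass L) := by
    rw [hcl]
    exact subset_closure ⟨1, conjSubgroup_one H⟩
  have hHinT : H ∈ {K : Subgroup G | ∀ s ∈ T, s ∈ K} := fun s hs => by
    rw [← hT]; exact Subgroup.subset_closure hs
  obtain ⟨M, hMT, g, hgM⟩ :=
    _root_.mem_closure_iff.mp hHcl _ (isOpen_forall_mem G T) hHinT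
  have hHM : H ≤ M := by
    rw [← hT, Subgroup.closure_le]
    exact fun s hs => hMT s hs
  -- conversely M lies in the closure of the conjugacy class of H
  have hMcl : M ∈ closure (conjClass H) := by
    rw [← hcl]
    exact subset_closure ⟨g, hgM⟩
  have hMH : M ≤ H := by
    intro x hx
    have hMin : M ∈ {K : Subgroup G | ∀ s ∈ insert x T, s ∈ K} := by
      intro s hs
      rcases Finset.mem_insert.mp hs with rfl | hs
      · exact hx
      · exact hMT s hs
    obtain ⟨K, hK, h, rfl⟩ :=
      _root_.mem_closure_iff.mp hMcl _ (isOpen_forall_mem G (insert x T)) hMin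
    have hsub : (↑T : Set G) ⊆ ↑(conjSubgroup h H) :=
      fun s hs => hK s (Finset.mem_insert_of_mem hs)
    have hHK : H ≤ conjSubgroup h H := by
      have h' : Subgroup.closure (↑T : Set G) ≤ conjSubgroup h H :=
        (Subgroup.closure_le _).mpr hsub
      exact hT ▸ h'
    have hhH : h ∈ H := by
      by_contra hcon
      have h0 := hssc h hcon
      have h1 : Subgroup.relIndex (conjSubgroup h H) H = 1 :=
        Subgroup.relIndex_eq_one.mpr hHK
      omega
    have : conjSubgroup h H = H := conjSubgroup_eq_self hhH
    rw [← this]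
    exact hK x (Finset.mem_insert_self x T)
  have : M = H := le_antisymm hMH hHM
  exact ⟨g, by rw [hgM, this]⟩

end QR
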